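/- For any arrangement of N hyperplanes in R^R, the number of regions is at most the sum over r from 0 to R of binomial(N, r). -/

import Mathlib

set_option linter.unusedVariables false


open Finset Module

open scoped Classical in
noncomputable def RealizedSet {E : Type} [AddCommGroup E] [Module ℝ E]
    {N : ℕ} (l : Fin N → E →ₗ[ℝ] ℝ) (c : Fin N → ℝ) : Finset (Fin N → Bool) :=
  Finset.univ.filter (fun s => ∃ x : E, ∀ i,
    if s i then 0 < l i x + c i else l i x + c i < 0)

lemma mem_RealizedSet {E : Type} [AddCommGroup E] [Module ℝ E]
    {N : ℕ} {l : Fin N → E →ₗ[ℝ] ℝ} {c : Fin N → ℝ} {s : Fin N → Bool} :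
    s ∈ RealizedSet l c ↔ ∃ x : E, ∀ i,
      if s i then 0 < l i x + c i else l i x + c i < 0 := by
  classical
  simp [RealizedSet]

lemma pascal_sum (N R : ℕ) :
    ∑ r ∈ Finset.range (R + 1), (N + 1).choose r
      = ∑ r ∈ Finset.range (R + 1), N.choose r + ∑ r ∈ Finset.range R, N.choose r := by
  induction R with
  | zero => simp
  | succ R ih =>
      rw [Finset.sum_range_succ, ih, Finset.sum_range_succ (n := R + 1),
        Finset.sum_range_succ (n := R) (f := fun r => N.choose r),
        Nat.choose_succ_succ']
      ring

/-- On a segment where an affine function changes strict sign, there is a zero,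
and all other affine functions keep their strict signs there. -/
lemma segment_zero {E : Type} [AddCommGroup E] [Module ℝ E]
    (l : E →ₗ[ℝ] ℝ) (c : ℝ) (x y : E)
    (hx : l x + c < 0) (hy : 0 < l y + c) :
    ∃ θ : ℝ, 0 ≤ θ ∧ θ ≤ 1 ∧ l (x + θ • (y - x)) + c = 0 := by
  set a := l x + c with ha
  set b := l y + c with hb
  have hab : a - b < 0 := by linarith
  refine ⟨a / (a - b), ?_, ?_, ?_⟩
  · exact le_of_lt (div_pos_of_neg_of_neg hx hab)
  · rw [div_le_one_of_neg hab]
    linarith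
  · have : l (x + (a / (a - b)) • (y - x)) = l x + (a / (a - b)) * (l y - l x) := by
      simp [map_add, map_smul, map_sub, smul_eq_mul]
    rw [this]
    have hne : a - b ≠ 0 := ne_of_lt hab
    field_simp
    ring

lemma sign_keep_pos {E : Type} [AddCommGroup E] [Module ℝ E]
    (l : E →ₗ[ℝ] ℝ) (c θ : ℝ) (x y : E) (h0 : 0 ≤ θ) (h1 : θ ≤ 1)
    (hx : 0 < l x + c) (hy : 0 < l y + c) : 0 < l (x + θ • (y - x)) + c := by
  have he : l (x + θ • (y - x)) = l x + θ * (l y - l x) := by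
    simp [map_add, map_smul, map_sub, smul_eq_mul]
  rw [he]
  rcases le_total (l x + c) (l y + c) with hc | hc
  · nlinarith [mul_nonneg h0 (sub_nonneg.2 hc)]
  · nlinarith [mul_nonneg (sub_nonneg.2 h1) (sub_nonneg.2 hc)]

lemma sign_keep_neg {E : Type} [AddCommGroup E] [Module ℝ E]
    (l : E →ₗ[ℝ] ℝ) (c θ : ℝ) (x y : E) (h0 : 0 ≤ θ) (h1 : θ ≤ 1)
    (hx : l x + c < 0) (hy : l y + c < 0) : l (x + θ • (y - x)) + c < 0 := by
  have he : l (x + θ • (y - x)) = l x + θ * (l y - l x) := by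
    simp [map_add, map_smul, map_sub, smul_eq_mul]
  rw [he]
  rcases le_total (l x + c) (l y + c) with hc | hc
  · nlinarith [mul_nonneg (sub_nonneg.2 h1) (sub_nonneg.2 hc)]
  · nlinarith [mul_nonneg h0 (sub_nonneg.2 hc)]

theorem realized_card_le (N : ℕ) :
    ∀ (R : ℕ) (E : Type) [AddCommGroup E] [Module ℝ E] [FiniteDimensional ℝ E],
      Module.finrank ℝ E ≤ R → ∀ (l : Fin N → E →ₗ[ℝ] ℝ) (c : Fin N → ℝ),
      (RealizedSet l c).card ≤ ∑ r ∈ Finset.range (R + 1), N.choose r := by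
  classical
  induction N with
  | zero =>
      intro R E _ _ _ _ l c
      have h1 : (RealizedSet l c).card ≤ 1 := by
        calc (RealizedSet l c).card ≤ (Finset.univ : Finset (Fin 0 → Bool)).card :=
              Finset.card_le_univ _
          _ = 1 := by simp
      refine h1.trans ?_
      have := Finset.single_le_sum (f := fun r => Nat.choose 0 r)
        (fun _ _ => Nat.zero_le _) (Finset.mem_range.2 (Nat.succ_pos R))
      simpa using this
  | succ N ih =>
      intro R E _ _ _ hR l c
      set l' : Fin N → E →ₗ[ℝ] ℝ := fun i => l i.castSucc with hl'
      set c' : Fin N → ℝ := fun i => c i.castSucc with hc'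
      set S : Finset (Fin (N + 1) → Bool) := RealizedSet l c with hS
      set T : Bool → Finset (Fin N → Bool) :=
        fun b => (S.filter (fun s => s (Fin.last N) = b)).image
          (fun s => s ∘ Fin.castSucc) with hT
      -- counting
      have hinj : ∀ b : Bool, Set.InjOn (fun s : Fin (N+1) → Bool => s ∘ Fin.castSucc)
          ↑(S.filter (fun s => s (Fin.last N) = b)) := by
        intro b s1 h1 s2 h2 he
        have hb1 : s1 (Fin.last N) = b := (Finset.mem_filter.1 h1).2
        have hb2 : s2 (Fin.last N) = b := (Finset.mem_filter.1 h2).2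
        funext i
        induction i using Fin.lastCases with
        | last => rw [hb1, hb2]
        | cast i => exact congrFun he i
      have hcardT : ∀ b, (T b).card = (S.filter (fun s => s (Fin.last N) = b)).card := by
        intro b; exact Finset.card_image_of_injOn (hinj b)
      have hsplit : S.card = (T true).card + (T false).card := by
        rw [hcardT, hcardT]
        rw [← Finset.card_filter_add_card_filter_not
          (s := S) (p := fun s => s (Fin.last N) = true)]
        congr 1
        exact congrArg Finset.card (Finset.filter_congr (fun s _ => by simp))
      have hunion : T true ∪ T false ⊆ RealizedSet l' c' := by
        intro t ht
        rcases Finset.mem_union.1 ht with ht | ht <;>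
        · rcases Finset.mem_image.1 ht with ⟨s, hs, rfl⟩
          rcases mem_RealizedSet.1 (Finset.mem_filter.1 hs).1 with ⟨x, hx⟩
          exact mem_RealizedSet.2 ⟨x, fun i => hx i.castSucc⟩
      have hkey : S.card ≤ (RealizedSet l' c').card + (T true ∩ T false).card := by
        rw [hsplit, ← Finset.card_union_add_card_inter]
        exact Nat.add_le_add_right (Finset.card_le_card hunion) _
      by_cases hempty : T true ∩ T false = ∅
      · rw [hempty] at hkey
        simp only [Finset.card_empty, Nat.add_zero] at hkey
        refine hkey.trans ((ih R E hR l' c').trans ?_)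
        exact Finset.sum_le_sum fun r _ => Nat.choose_le_choose r (Nat.le_succ N)
      · -- intersection nonempty: l (last) is a genuine hyperplane
        rcases Finset.nonempty_iff_ne_empty.2 hempty with ⟨t0, ht0⟩
        have hex : ∀ t ∈ T true ∩ T false,
            ∃ u v : E, (0 < l (Fin.last N) u + c (Fin.last N)) ∧
              (l (Fin.last N) v + c (Fin.last N) < 0) ∧
              (∀ i : Fin N, if t i then 0 < l i.castSucc u + c i.castSucc
                else l i.castSucc u + c i.castSucc < 0) ∧
              (∀ i : Fin N, if t i then 0 < l i.castSucc v + c i.castSucc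
                else l i.castSucc v + c i.castSucc < 0) := by
          intro t ht0
          rcases Finset.mem_image.1 (Finset.mem_inter.1 ht0).1 with ⟨su, hsu, hequ⟩
          rcases Finset.mem_image.1 (Finset.mem_inter.1 ht0).2 with ⟨sv, hsv, heqv⟩
          rcases mem_RealizedSet.1 (Finset.mem_filter.1 hsu).1 with ⟨u, hu⟩
          rcases mem_RealizedSet.1 (Finset.mem_filter.1 hsv).1 with ⟨v, hv⟩
          have hbu : su (Fin.last N) = true := (Finset.mem_filter.1 hsu).2
          have hbv : sv (Fin.last N) = false := (Finset.mem_filter.1 hsv).2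
          refine ⟨u, v, ?_, ?_, ?_, ?_⟩
          · have := hu (Fin.last N); rwa [hbu, if_pos rfl] at this
          · have := hv (Fin.last N); rw [hbv] at this; simpa using this
          · intro i
            have := hu i.castSucc
            rwa [show su i.castSucc = t i from congrFun hequ i] at this
          · intro i
            have := hv i.castSucc
            rwa [show sv i.castSucc = t i from congrFun heqv i] at this
        rcases hex t0 ht0 with ⟨u0, v0, hu0, hv0, -, -⟩
        cases R with
        | zero =>
            have hsub : Subsingleton E := Module.finrank_zero_iff.mp (Nat.le_zero.mp hR)
            have : u0 = v0 := Subsingleton.elim _ _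
            rw [this] at hu0; linarith
        | succ R' =>
            rcases segment_zero (l (Fin.last N)) (c (Fin.last N)) v0 u0 hv0 hu0 with
              ⟨θ0, -, -, hx0⟩
            set x0 : E := v0 + θ0 • (u0 - v0) with hx0def
            set K : Submodule ℝ E := LinearMap.ker (l (Fin.last N)) with hK
            have hKne : K ≠ ⊤ := by
              intro htop
              have : u0 - v0 ∈ K := htop ▸ Submodule.mem_top
              have h2 : l (Fin.last N) (u0 - v0) = 0 := this
              rw [map_sub] at h2
              linarith
            have hKfin : Module.finrank ℝ K ≤ R' := by
              have := Submodule.finrank_lt hKne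
              omega
            set l'' : Fin N → K →ₗ[ℝ] ℝ := fun i => (l i.castSucc).comp K.subtype with hl''
            set c'' : Fin N → ℝ := fun i => l i.castSucc x0 + c i.castSucc with hc''
            have hsub : T true ∩ T false ⊆ RealizedSet l'' c'' := by
              intro t ht
              rcases hex t ht with ⟨u, v, hu, hv, htu, htv⟩
              rcases segment_zero (l (Fin.last N)) (c (Fin.last N)) v u hv hu with
                ⟨θ, h0, h1, hz0⟩
              set z : E := v + θ • (u - v) with hzdef
              have hzK : z - x0 ∈ K := by
                have : l (Fin.last N) (z - x0) = 0 := by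
                  rw [map_sub]; linarith
                exact this
              refine mem_RealizedSet.2 ⟨⟨z - x0, hzK⟩, fun i => ?_⟩
              have hval : l'' i ⟨z - x0, hzK⟩ + c'' i = l i.castSucc z + c i.castSucc := by
                simp only [hl'', hc'', LinearMap.comp_apply, Submodule.coe_subtype, map_sub]
                ring
              rw [hval]
              rcases hti : t i with _ | _
              · have h1' := htv i; have h2' := htu i
                rw [hti] at h1' h2'
                simp only [if_false, Bool.false_eq_true] at h1' h2' ⊢
                exact sign_keep_neg _ _ _ _ _ h0 h1 h1' h2'
              · have h1' := htv i; have h2' := htu i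
                rw [hti] at h1' h2'
                simp only [if_true] at h1' h2' ⊢
                exact sign_keep_pos _ _ _ _ _ h0 h1 h1' h2'
            rw [pascal_sum]
            refine hkey.trans (Nat.add_le_add ?_ ?_)
            · exact ih (R' + 1) E hR l' c'
            · exact (Finset.card_le_card hsub).trans (ih R' K hKfin l'' c'')

/-- For any arrangement of `N` hyperplanes in `ℝ^R`, the number of
regions (connected components of the complement of the union of the
hyperplanes) is at most `∑_{r=0}^{R} (N choose r)`. -/
theorem number_of_regions_le (N R : ℕ)
    (m : Fin N → (Fin R → ℝ)) (h : Fin N → ℝ)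
    (hm : ∀ i, m i ≠ 0) :
    Nat.card (ConnectedComponents
      ↥((⋃ i, {v : Fin R → ℝ | ∑ j, m i j * v j = h i})ᶜ)) ≤
      ∑ r ∈ Finset.range (R + 1), N.choose r := by
  classical
  set l : Fin N → (Fin R → ℝ) →ₗ[ℝ] ℝ :=
    fun i => ∑ j, m i j • LinearMap.proj j with hldef
  have hl : ∀ i x, l i x = ∑ j, m i j * x j := by
    intro i x
    simp [hldef, LinearMap.sum_apply]
  set c : Fin N → ℝ := fun i => -h i with hcdef
  set Yset : Set (Fin R → ℝ) :=
    (⋃ i, {v : Fin R → ℝ | ∑ j, m i j * v j = h i})ᶜ with hYdef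
  have hmem : ∀ x : Fin R → ℝ, x ∈ Yset ↔ ∀ i, l i x + c i ≠ 0 := by
    intro x
    simp only [hYdef, Set.mem_compl_iff, Set.mem_iUnion, Set.mem_setOf_eq, not_exists, hl,
      hcdef]
    constructor
    · intro hx i hzero
      exact hx i (by linarith)
    · intro hx i hi
      exact hx i (by rw [hi]; ring)
  set sgn : ↥Yset → (Fin N → Bool) :=
    fun x i => decide (0 < l i x.val + c i) with hsgndef
  -- every point realizes its sign vector
  have hreal : ∀ x : ↥Yset, ∀ i,
      if sgn x i then 0 < l i x.val + c i else l i x.val + c i < 0 := by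
    intro x i
    rcases hs : sgn x i with _ | _
    · simp only [hs, if_false, Bool.false_eq_true]
      have h1 : ¬ (0 < l i x.val + c i) := by
        simpa [hsgndef] using hs
      have h2 : l i x.val + c i ≠ 0 := (hmem x.val).1 x.prop i
      rcases lt_trichotomy (l i x.val + c i) 0 with h' | h' | h'
      · exact h'
      · exact absurd h' h2
      · exact absurd h' h1
    · simp only [hs, if_true]
      simpa [hsgndef] using hs
  -- continuity of the sign map
  have hlc : ∀ i, Continuous (fun x : ↥Yset => l i x.val + c i) := by
    intro i
    exact ((l i).continuous_of_finiteDimensional.comp continuous_subtype_val).add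
      continuous_const
  have hcont : Continuous sgn := by
    rw [continuous_discrete_rng]
    intro s
    have hpre : sgn ⁻¹' {s} = ⋂ i, {x : ↥Yset | decide (0 < l i x.val + c i) = s i} := by
      ext x
      simp only [Set.mem_preimage, Set.mem_singleton_iff, Set.mem_iInter, Set.mem_setOf_eq,
        hsgndef]
      exact ⟨fun hx i => congrFun hx i, fun hx => funext hx⟩
    rw [hpre]
    apply isOpen_iInter_of_finite
    intro i
    rcases hsi : s i with _ | _
    · have : {x : ↥Yset | decide (0 < l i x.val + c i) = false}
          = {x : ↥Yset | l i x.val + c i < 0} := by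
        ext x
        simp only [Set.mem_setOf_eq, decide_eq_false_iff_not, not_lt]
        constructor
        · intro hx
          exact lt_of_le_of_ne hx ((hmem x.val).1 x.prop i)
        · intro hx; exact le_of_lt hx
      rw [this]
      exact isOpen_lt (hlc i) continuous_const
    · have : {x : ↥Yset | decide (0 < l i x.val + c i) = true}
          = {x : ↥Yset | 0 < l i x.val + c i} := by
        ext x; simp
      rw [this]
      exact isOpen_lt continuous_const (hlc i)
  set F : ConnectedComponents ↥Yset → (Fin N → Bool) := hcont.connectedComponentsLift
    with hFdef
  -- injectivity of F
  have hFinj : Function.Injective F := by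
    intro a b hab
    obtain ⟨x, rfl⟩ := ConnectedComponents.surjective_coe a
    obtain ⟨y, rfl⟩ := ConnectedComponents.surjective_coe b
    rw [hFdef, hcont.connectedComponentsLift_apply_coe,
      hcont.connectedComponentsLift_apply_coe] at hab
    set s : Fin N → Bool := sgn x with hs
    set Cset : Set (Fin R → ℝ) :=
      {v | ∀ i, if s i then 0 < l i v + c i else l i v + c i < 0} with hCdef
    have hxC : x.val ∈ Cset := fun i => hreal x i
    have hyC : y.val ∈ Cset := by
      intro i
      have := hreal y i
      rwa [← hab] at this
    have hCY : Cset ⊆ Yset := by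
      intro v hv
      rw [hmem]
      intro i
      have := hv i
      rcases hsi : s i with _ | _
      · simp only [hsi, Bool.false_eq_true, if_false] at this
        exact ne_of_lt this
      · simp only [hsi, if_true] at this
        exact ne_of_gt this
    have hconv : Convex ℝ Cset := by
      intro u hu v hv a b ha hb hab2
      have heq : a • u + b • v = u + b • (v - u) := by
        have haa : a = 1 - b := by linarith
        rw [haa, sub_smul, one_smul, smul_sub]
        abel
      rw [heq]
      intro i
      have hu' := hu i
      have hv' := hv i
      have hb1 : b ≤ 1 := by linarith
      rcases hsi : s i with _ | _
      · simp only [hsi, Bool.false_eq_true, if_false] at hu' hv' ⊢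
        exact sign_keep_neg _ _ _ _ _ hb hb1 hu' hv'
      · simp only [hsi, if_true] at hu' hv' ⊢
        exact sign_keep_pos _ _ _ _ _ hb hb1 hu' hv'
    have hpreC : IsPreconnected (Subtype.val ⁻¹' Cset : Set ↥Yset) := by
      rw [← Topology.IsInducing.subtypeVal.isPreconnected_image]
      have : Subtype.val '' (Subtype.val ⁻¹' Cset : Set ↥Yset) = Cset := by
        rw [Set.image_preimage_eq_inter_range, Subtype.range_val]
        exact Set.inter_eq_left.2 hCY
      rw [this]
      exact hconv.isPreconnected
    have hxy : connectedComponent x = connectedComponent y := by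
      have hsub := hpreC.subset_connectedComponent (x := x) hxC
      have : (y : ↥Yset) ∈ connectedComponent x := hsub hyC
      exact connectedComponent_eq this
    exact ConnectedComponents.coe_eq_coe.2 hxy
  -- the induced injection into the realized set
  have hinto : ∀ q : ConnectedComponents ↥Yset, F q ∈ RealizedSet l c := by
    intro q
    obtain ⟨x, rfl⟩ := ConnectedComponents.surjective_coe q
    rw [hFdef, hcont.connectedComponentsLift_apply_coe]
    exact mem_RealizedSet.2 ⟨x.val, hreal x⟩
  have hcard : Nat.card (ConnectedComponents ↥Yset) ≤ (RealizedSet l c).card := by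
    have hG : Function.Injective
        (fun q : ConnectedComponents ↥Yset =>
          (⟨F q, hinto q⟩ : {s : Fin N → Bool // s ∈ RealizedSet l c})) := by
      intro a b hab
      exact hFinj (congrArg Subtype.val hab)
    calc Nat.card (ConnectedComponents ↥Yset)
        ≤ Nat.card {s : Fin N → Bool // s ∈ RealizedSet l c} :=
          Nat.card_le_card_of_injective _ hG
      _ = (RealizedSet l c).card := Nat.card_eq_finsetCard _
  refine hcard.trans ?_
  exact realized_card_le N R (Fin R → ℝ)
    (le_of_eq (Module.finrank_fin_fun ℝ)) l c
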